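/- As bivariate formal power series over ℚ, T_x·T_y = T_x + T_y - T. Equivalently, for all (r,s) ≠ (0,0): ∑_{r1=0}^{r} ∑_{s1=0}^{s} C(r,r1)·C(s,s1)·r1·N_bi(r1,s1,0)·(s-s1)·N_bi(r-r1,s-s1,0) = (r+s-1)·N_bi(r,s,0). -/

import Mathlib

open Finset

/-- Number of simple connected bipartite graphs on the labeled vertex set
`Fin r ⊕ Fin s`, with all edges joining the two parts and exactly
`r + s - 1 + k` edges (so `k` is the Betti number). -/
noncomputable def Nbi (r s k : ℕ) : ℕ :=
  Nat.card {G : SimpleGraph (Fin r ⊕ Fin s) //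
    G.Connected ∧
    (∀ a b, ¬ G.Adj (Sum.inl a) (Sum.inl b)) ∧
    (∀ a b, ¬ G.Adj (Sum.inr a) (Sum.inr b)) ∧
    Nat.card G.edgeSet = r + s - 1 + k}

/-- `F_k(x,y) = ∑ N_bi(r,s,k) x^r y^s / (r! s!)`. -/
noncomputable def Fk (k : ℕ) : MvPowerSeries (Fin 2) ℚ :=
  fun m => (Nbi (m 0) (m 1) k : ℚ) / ((m 0).factorial * (m 1).factorial)

/-- `T_x = x ∂T/∂x`, coefficientwise `r · N_bi(r,s,0)/(r! s!)`. -/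
noncomputable def Tx : MvPowerSeries (Fin 2) ℚ :=
  fun m => (m 0 : ℚ) * (Nbi (m 0) (m 1) 0 : ℚ) / ((m 0).factorial * (m 1).factorial)

/-- `T_y = y ∂T/∂y`, coefficientwise `s · N_bi(r,s,0)/(r! s!)`. -/
noncomputable def Ty : MvPowerSeries (Fin 2) ℚ :=
  fun m => (m 1 : ℚ) * (Nbi (m 0) (m 1) 0 : ℚ) / ((m 0).factorial * (m 1).factorial)

noncomputable def Zs : MvPowerSeries (Fin 2) ℚ := Tx + Ty

noncomputable def Ws : MvPowerSeries (Fin 2) ℚ := Tx * Ty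

/-- `T(x,y) = ∑ N_bi(r,s,0) x^r y^s/(r! s!)`, the spanning-tree generating function. -/
noncomputable def Ts : MvPowerSeries (Fin 2) ℚ :=
  fun m => (Nbi (m 0) (m 1) 0 : ℚ) / ((m 0).factorial * (m 1).factorial)

section AuxProofOfStmt8
open SimpleGraph

variable {V : Type*}

/-- Walk surgery: if `w` is reachable from `a` in `G`, then in `G` minus the edge `s(u,v)`,
`a` reaches `w`, or `a` reaches `u` or `v` (when the walk used the edge). -/
lemma reach_delete_of_reach {G : SimpleGraph V} {u v : V} {a b : V}
    (p : G.Walk a b) :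
    (G.deleteEdges {s(u,v)}).Reachable a b ∨
    ((G.deleteEdges {s(u,v)}).Reachable a u ∨ (G.deleteEdges {s(u,v)}).Reachable a v) ∧
    ((G.deleteEdges {s(u,v)}).Reachable b u ∨ (G.deleteEdges {s(u,v)}).Reachable b v) := by
  induction p with
  | nil => exact Or.inl (Reachable.refl _)
  | @cons x y z hxy p ih =>
    by_cases he : s(x,y) = s(u,v)
    · -- x,y are u,v in some order
      rw [Sym2.eq_iff] at he
      have hx : x = u ∨ x = v := by rcases he with ⟨rfl, rfl⟩ | ⟨rfl, rfl⟩ <;> simp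
      have hy : y = u ∨ y = v := by rcases he with ⟨rfl, rfl⟩ | ⟨rfl, rfl⟩ <;> simp
      refine Or.inr ⟨?_, ?_⟩
      · rcases hx with rfl | rfl
        · exact Or.inl (Reachable.refl _)
        · exact Or.inr (Reachable.refl _)
      · rcases ih with h | ⟨_, hb⟩
        · rcases hy with rfl | rfl
          · exact Or.inl h.symm
          · exact Or.inr h.symm
        · exact hb
    · have hadj : (G.deleteEdges {s(u,v)}).Adj x y := by
        simp [deleteEdges_adj, hxy, he]
      rcases ih with h | ⟨hy', hb⟩
      · exact Or.inl (hadj.reachable.trans h)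
      · refine Or.inr ⟨?_, hb⟩
        rcases hy' with h | h
        · exact Or.inl (hadj.reachable.trans h)
        · exact Or.inr (hadj.reachable.trans h)

/-- Deleting a non-bridge edge preserves connectedness. -/
lemma connected_delete_of_reach {G : SimpleGraph V} {u v : V}
    (hG : G.Connected) (h : (G.deleteEdges {s(u,v)}).Reachable u v) :
    (G.deleteEdges {s(u,v)}).Connected := by
  rw [connected_iff_exists_forall_reachable]
  have hne : Nonempty V := hG.nonempty
  refine ⟨u, fun w => ?_⟩
  obtain ⟨p⟩ := hG u w
  rcases reach_delete_of_reach (u := u) (v := v) p with hp | ⟨_, hw⟩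
  · exact hp
  · rcases hw with hw | hw
    · exact hw.symm
    · exact (hw.trans h.symm).symm

lemma card_edge_delete [Fintype V] [DecidableEq V] {G : SimpleGraph V} {u v : V}
    (h : G.Adj u v) [DecidableRel G.Adj] :
    Nat.card (G.deleteEdges {s(u,v)}).edgeSet + 1 = Nat.card G.edgeSet := by
  classical
  have h1 : (G.deleteEdges {s(u,v)}).edgeSet = G.edgeSet \ {s(u,v)} :=
    edgeSet_deleteEdges _
  simp only [Nat.card_eq_fintype_card, ← Set.toFinset_card]
  have : (G.deleteEdges {s(u,v)}).edgeSet.toFinset = G.edgeSet.toFinset \ {s(u,v)} := by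
    rw [Set.toFinset_congr h1]
    simp
  rw [this, Finset.card_sdiff_of_subset (by simp [h])]
  simp only [Finset.card_singleton]
  have : 1 ≤ G.edgeSet.toFinset.card := by
    rw [Nat.succ_le_iff, Finset.card_pos]
    exact ⟨s(u,v), by simp [h]⟩
  omega

lemma conn_card_le [Fintype V] : ∀ (n : ℕ) (G : SimpleGraph V), Nat.card G.edgeSet = n →
    G.Connected → Fintype.card V ≤ n + 1 := by
  intro n
  induction n using Nat.strong_induction_on with
  | _ n ih =>
    intro G hn hG
    classical
    by_cases hac : G.IsAcyclic
    · have ht : G.IsTree := ⟨hG, hac⟩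
      have := ht.card_edgeFinset
      rw [← this, ← hn, Nat.card_eq_fintype_card, ← edgeFinset_card]
    · rw [isAcyclic_iff_forall_adj_isBridge] at hac
      push_neg at hac
      obtain ⟨u, v, huv, hbr⟩ := hac
      rw [isBridge_iff] at hbr
      push_neg at hbr
      have hre : (G.deleteEdges {s(u,v)}).Reachable u v := hbr
      have hconn := connected_delete_of_reach hG hre
      have hcard := card_edge_delete huv
      rw [hn] at hcard
      have hlt : Nat.card (G.deleteEdges {s(u,v)}).edgeSet < n := by omega
      have := ih _ hlt _ rfl hconn
      omega

lemma isTree_of_connected_card (G : SimpleGraph V) [Fintype V]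
    (hG : G.Connected) (hc : Nat.card G.edgeSet + 1 = Fintype.card V) : G.IsTree := by
  classical
  refine ⟨hG, ?_⟩
  by_contra hac
  rw [isAcyclic_iff_forall_adj_isBridge] at hac
  push_neg at hac
  obtain ⟨u, v, huv, hbr⟩ := hac
  rw [isBridge_iff] at hbr
  push_neg at hbr
  have hre : (G.deleteEdges {s(u,v)}).Reachable u v := hbr
  have hconn := connected_delete_of_reach hG hre
  have hcard := card_edge_delete huv
  have := conn_card_le (Nat.card (G.deleteEdges {s(u,v)}).edgeSet) _ rfl hconn
  omega


def Bip {α β : Type*} (G : SimpleGraph (α ⊕ β)) : Prop :=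
  (∀ a b, ¬ G.Adj (Sum.inl a) (Sum.inl b)) ∧ (∀ a b, ¬ G.Adj (Sum.inr a) (Sum.inr b))

lemma sym2_cross_eq {α β : Type*} {u u' : α} {v v' : β} :
    s(Sum.inl u, Sum.inr v) = s((Sum.inl u' : α ⊕ β), Sum.inr v') ↔ u = u' ∧ v = v' := by
  rw [Sym2.eq_iff]
  constructor
  · rintro (⟨h1, h2⟩ | ⟨h1, h2⟩)
    · exact ⟨Sum.inl.inj h1, Sum.inr.inj h2⟩
    · exact absurd h1 (by simp)
  · rintro ⟨rfl, rfl⟩; exact Or.inl ⟨rfl, rfl⟩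

section Glue

variable (A : Finset (Fin r)) (B : Finset (Fin s))
  (T1 : SimpleGraph (↥A ⊕ ↥B)) (T2 : SimpleGraph (↥(Aᶜ) ⊕ ↥(Bᶜ)))
  (a : ↥A) (b : ↥(Bᶜ))

def glueRel (u : Fin r) (v : Fin s) : Prop :=
  (∃ (hu : u ∈ A) (hv : v ∈ B), T1.Adj (Sum.inl ⟨u, hu⟩) (Sum.inr ⟨v, hv⟩)) ∨
  (∃ (hu : u ∈ Aᶜ) (hv : v ∈ Bᶜ), T2.Adj (Sum.inl ⟨u, hu⟩) (Sum.inr ⟨v, hv⟩)) ∨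
  (u = ↑a ∧ v = ↑b)

def glue : SimpleGraph (Fin r ⊕ Fin s) where
  Adj x y := match x, y with
    | Sum.inl u, Sum.inr v => glueRel A B T1 T2 a b u v
    | Sum.inr v, Sum.inl u => glueRel A B T1 T2 a b u v
    | _, _ => False
  symm := by
    constructor
    rintro (u | u) (v | v) h
    · exact h.elim
    · exact h
    · exact h
    · exact h.elim
  loopless := by constructor; rintro (u | u) h <;> exact h.elim

@[simp] lemma glue_adj_inl_inr {u : Fin r} {v : Fin s} :
    (glue A B T1 T2 a b).Adj (Sum.inl u) (Sum.inr v) ↔ glueRel A B T1 T2 a b u v := Iff.rfl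

@[simp] lemma glue_adj_inl_inl {u v : Fin r} :
    ¬ (glue A B T1 T2 a b).Adj (Sum.inl u) (Sum.inl v) := fun h => h.elim

@[simp] lemma glue_adj_inr_inr {u v : Fin s} :
    ¬ (glue A B T1 T2 a b).Adj (Sum.inr u) (Sum.inr v) := fun h => h.elim

@[simp] lemma glue_adj_inr_inl {u : Fin r} {v : Fin s} :
    (glue A B T1 T2 a b).Adj (Sum.inr v) (Sum.inl u) ↔ glueRel A B T1 T2 a b u v := Iff.rfl

lemma glue_bip : Bip (glue A B T1 T2 a b) :=
  ⟨fun _ _ h => h.elim, fun _ _ h => h.elim⟩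

/-- the marked edge -/
def gedge : Sym2 (Fin r ⊕ Fin s) := s(Sum.inl (↑a : Fin r), Sum.inr (↑b : Fin s))

lemma glue_adj_edge : (glue A B T1 T2 a b).Adj (Sum.inl ↑a) (Sum.inr ↑b) :=
  Or.inr (Or.inr ⟨rfl, rfl⟩)

/-- The glue graph minus the marked edge. -/
def glue' : SimpleGraph (Fin r ⊕ Fin s) :=
  (glue A B T1 T2 a b).deleteEdges {gedge A B a b}

lemma glue'_adj_inl_inr {u : Fin r} {v : Fin s} :
    (glue' A B T1 T2 a b).Adj (Sum.inl u) (Sum.inr v) ↔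
      (∃ (hu : u ∈ A) (hv : v ∈ B), T1.Adj (Sum.inl ⟨u, hu⟩) (Sum.inr ⟨v, hv⟩)) ∨
      (∃ (hu : u ∈ Aᶜ) (hv : v ∈ Bᶜ), T2.Adj (Sum.inl ⟨u, hu⟩) (Sum.inr ⟨v, hv⟩)) := by
  unfold glue'
  rw [deleteEdges_adj]
  simp only [Set.mem_singleton_iff, gedge, sym2_cross_eq]
  constructor
  · rintro ⟨h1 | h1 | h1, h2⟩
    · exact Or.inl h1
    · exact Or.inr h1
    · exact absurd h1 h2
  · rintro (h | h)
    · obtain ⟨hu, hv, had⟩ := h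
      refine ⟨Or.inl ⟨hu, hv, had⟩, fun hc => ?_⟩
      have : (↑b : Fin s) ∈ B := hc.2 ▸ hv
      exact absurd this (Finset.mem_compl.mp b.2)
    · obtain ⟨hu, hv, had⟩ := h
      refine ⟨Or.inr (Or.inl ⟨hu, hv, had⟩), fun hc => ?_⟩
      have : (↑a : Fin r) ∈ Aᶜ := hc.1 ▸ hu
      exact absurd a.2 (Finset.mem_compl.mp this)

/-- adjacency in `glue'` preserves sides -/
def gside : Fin r ⊕ Fin s → Prop := fun z => match z with
  | Sum.inl u => u ∈ A
  | Sum.inr v => v ∈ B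

lemma glue'_side {x y : Fin r ⊕ Fin s} (h : (glue' A B T1 T2 a b).Adj x y) :
    gside A B x ↔ gside A B y := by
  match x, y with
  | Sum.inl u, Sum.inl v => exact absurd ((deleteEdges_le _) h) (glue_adj_inl_inl A B T1 T2 a b)
  | Sum.inr u, Sum.inr v => exact absurd ((deleteEdges_le _) h) (glue_adj_inr_inr A B T1 T2 a b)
  | Sum.inl u, Sum.inr v =>
    rw [glue'_adj_inl_inr] at h
    rcases h with ⟨hu, hv, -⟩ | ⟨hu, hv, -⟩
    · simp [gside, hu, hv]
    · simp [gside, Finset.mem_compl.mp hu, Finset.mem_compl.mp hv]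
  | Sum.inr v, Sum.inl u =>
    have h' : (glue' A B T1 T2 a b).Adj (Sum.inl u) (Sum.inr v) := h.symm
    rw [glue'_adj_inl_inr] at h'
    rcases h' with ⟨hu, hv, -⟩ | ⟨hu, hv, -⟩
    · simp [gside, hu, hv]
    · simp [gside, Finset.mem_compl.mp hu, Finset.mem_compl.mp hv]

lemma glue'_side_reach {x y : Fin r ⊕ Fin s} (h : (glue' A B T1 T2 a b).Reachable x y) :
    gside A B x ↔ gside A B y := by
  obtain ⟨p⟩ := h
  induction p with
  | nil => rfl
  | cons h q ih => exact (glue'_side A B T1 T2 a b h).trans ih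

/-- hom from `T1` into `glue'` -/
def hom1 (bip1 : Bip T1) : T1 →g glue' A B T1 T2 a b where
  toFun := Sum.map Subtype.val Subtype.val
  map_rel' := by
    rintro (u | u) (v | v) h
    · exact absurd h (bip1.1 u v)
    · exact (glue'_adj_inl_inr A B T1 T2 a b).mpr (Or.inl ⟨u.2, v.2, h⟩)
    · exact ((glue'_adj_inl_inr A B T1 T2 a b).mpr (Or.inl ⟨v.2, u.2, h.symm⟩)).symm
    · exact absurd h (bip1.2 u v)

def hom2 (bip2 : Bip T2) : T2 →g glue' A B T1 T2 a b where
  toFun := Sum.map Subtype.val Subtype.val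
  map_rel' := by
    rintro (u | u) (v | v) h
    · exact absurd h (bip2.1 u v)
    · exact (glue'_adj_inl_inr A B T1 T2 a b).mpr (Or.inr ⟨u.2, v.2, h⟩)
    · exact ((glue'_adj_inl_inr A B T1 T2 a b).mpr (Or.inr ⟨v.2, u.2, h.symm⟩)).symm
    · exact absurd h (bip2.2 u v)

lemma reach1 (bip1 : Bip T1) (hc1 : T1.Connected) (z : ↥A ⊕ ↥B) :
    (glue' A B T1 T2 a b).Reachable (Sum.map Subtype.val Subtype.val z) (Sum.inl ↑a) := by
  have := (hc1 z (Sum.inl a)).map (hom1 A B T1 T2 a b bip1)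
  exact this

lemma reach2 (bip2 : Bip T2) (hc2 : T2.Connected) (z : ↥(Aᶜ) ⊕ ↥(Bᶜ)) :
    (glue' A B T1 T2 a b).Reachable (Sum.map Subtype.val Subtype.val z) (Sum.inr ↑b) := by
  have := (hc2 z (Sum.inr b)).map (hom2 A B T1 T2 a b bip2)
  exact this

lemma glue_connected (bip1 : Bip T1) (hc1 : T1.Connected)
    (bip2 : Bip T2) (hc2 : T2.Connected) : (glue A B T1 T2 a b).Connected := by
  rw [connected_iff_exists_forall_reachable]
  refine ⟨Sum.inl ↑a, fun w => ?_⟩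
  have hle : glue' A B T1 T2 a b ≤ glue A B T1 T2 a b := deleteEdges_le _
  have hab : (glue A B T1 T2 a b).Reachable (Sum.inl ↑a) (Sum.inr ↑b) :=
    (glue_adj_edge A B T1 T2 a b).reachable
  have key : ∀ w : Fin r ⊕ Fin s, (glue A B T1 T2 a b).Reachable w (Sum.inl ↑a) ∨
      (glue A B T1 T2 a b).Reachable w (Sum.inr ↑b) := by
    rintro (u | v)
    · by_cases hu : u ∈ A
      · exact Or.inl ((reach1 A B T1 T2 a b bip1 hc1 (Sum.inl ⟨u, hu⟩)).mono hle)
      · exact Or.inr ((reach2 A B T1 T2 a b bip2 hc2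
          (Sum.inl ⟨u, Finset.mem_compl.mpr hu⟩)).mono hle)
    · by_cases hv : v ∈ B
      · exact Or.inl ((reach1 A B T1 T2 a b bip1 hc1 (Sum.inr ⟨v, hv⟩)).mono hle)
      · exact Or.inr ((reach2 A B T1 T2 a b bip2 hc2
          (Sum.inr ⟨v, Finset.mem_compl.mpr hv⟩)).mono hle)
  rcases key w with h | h
  · exact h.symm
  · exact (h.trans hab.symm).symm

/-- membership characterization of `A` from the glued graph -/
lemma glue_mem_A_iff (bip1 : Bip T1) (hc1 : T1.Connected) (x : Fin r) :
    x ∈ A ↔ (glue' A B T1 T2 a b).Reachable (Sum.inl x) (Sum.inl ↑a) := by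
  constructor
  · intro hx
    exact reach1 A B T1 T2 a b bip1 hc1 (Sum.inl ⟨x, hx⟩)
  · intro h
    have := glue'_side_reach A B T1 T2 a b h
    simpa [gside, a.2] using this

lemma glue_mem_B_iff (bip1 : Bip T1) (hc1 : T1.Connected) (y : Fin s) :
    y ∈ B ↔ (glue' A B T1 T2 a b).Reachable (Sum.inr y) (Sum.inl ↑a) := by
  constructor
  · intro hy
    exact reach1 A B T1 T2 a b bip1 hc1 (Sum.inr ⟨y, hy⟩)
  · intro h
    have := glue'_side_reach A B T1 T2 a b h
    simpa [gside, a.2] using this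

end Glue

@[reducible] def CrossPairs {α β : Type*} (G : SimpleGraph (α ⊕ β)) : Type _ :=
  {p : α × β // G.Adj (Sum.inl p.1) (Sum.inr p.2)}

section Glue2

variable (A : Finset (Fin r)) (B : Finset (Fin s))
  (T1 : SimpleGraph (↥A ⊕ ↥B)) (T2 : SimpleGraph (↥(Aᶜ) ⊕ ↥(Bᶜ)))
  (a : ↥A) (b : ↥(Bᶜ))

noncomputable def glueCrossEquiv :
    (CrossPairs T1 ⊕ CrossPairs T2 ⊕ Unit) ≃ CrossPairs (glue A B T1 T2 a b) := by
  apply Equiv.ofBijective (fun x => match x with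
    | Sum.inl p => ⟨(↑p.1.1, ↑p.1.2), Or.inl ⟨p.1.1.2, p.1.2.2, by simpa using p.2⟩⟩
    | Sum.inr (Sum.inl p) =>
        ⟨(↑p.1.1, ↑p.1.2), Or.inr (Or.inl ⟨p.1.1.2, p.1.2.2, by simpa using p.2⟩)⟩
    | Sum.inr (Sum.inr _) => ⟨(↑a, ↑b), Or.inr (Or.inr ⟨rfl, rfl⟩)⟩)
  constructor
  · rintro (p | p | p) (q | q | q) h <;> dsimp only at h <;>
      simp only [Subtype.ext_iff, Prod.mk.injEq] at h <;> obtain ⟨h1, h2⟩ := h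
    · congr 1
      exact Subtype.ext (Prod.ext (Subtype.ext h1) (Subtype.ext h2))
    · exact absurd (h2 ▸ p.1.2.2) (by simpa using (Finset.mem_compl.mp q.1.2.2))
    · exact absurd (h2 ▸ p.1.2.2) (Finset.mem_compl.mp b.2)
    · exact absurd (h2.symm ▸ p.1.2.2) (by simpa using (Finset.mem_compl.mp p.1.2.2 (h2 ▸ q.1.2.2)))
    · congr 2
      exact Subtype.ext (Prod.ext (Subtype.ext h1) (Subtype.ext h2))
    · exact absurd (h1 ▸ p.1.1.2) (by simpa using (Finset.mem_compl.mp p.1.1.2 (h1.symm ▸ a.2)))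
    · exact absurd (h2.symm ▸ q.1.2.2) (Finset.mem_compl.mp b.2)
    · exact absurd (h1.symm ▸ q.1.1.2) (by simpa using (Finset.mem_compl.mp q.1.1.2 (h1 ▸ a.2)))
    · rfl
  · rintro ⟨⟨u, v⟩, h⟩
    rcases h with ⟨hu, hv, had⟩ | ⟨hu, hv, had⟩ | ⟨h1, h2⟩
    · exact ⟨Sum.inl ⟨(⟨u, hu⟩, ⟨v, hv⟩), had⟩, rfl⟩
    · exact ⟨Sum.inr (Sum.inl ⟨(⟨u, hu⟩, ⟨v, hv⟩), had⟩), rfl⟩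
    · exact ⟨Sum.inr (Sum.inr Unit.unit), Subtype.ext (Prod.ext h1.symm h2.symm)⟩

end Glue2

lemma crossPairs_equiv {α β : Type*} (G : SimpleGraph (α ⊕ β)) (hG : Bip G) :
    Nonempty (CrossPairs G ≃ G.edgeSet) := by
  refine ⟨Equiv.ofBijective (fun p => ⟨s(Sum.inl p.1.1, Sum.inr p.1.2), p.2⟩) ⟨?_, ?_⟩⟩
  · rintro ⟨⟨a, b⟩, h⟩ ⟨⟨a', b'⟩, h'⟩ he
    simp only [Subtype.ext_iff, Sym2.eq_iff] at he
    rcases he with ⟨h1, h2⟩ | ⟨h1, h2⟩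
    · simp only [Sum.inl.injEq] at h1
      simp only [Sum.inr.injEq] at h2
      simp [Subtype.ext_iff, Prod.ext_iff, h1, h2]
    · exact absurd h1 (by simp)
  · rintro ⟨e, he⟩
    induction e with
    | _ x y =>
      match x, y with
      | Sum.inl a, Sum.inl b => exact absurd he (hG.1 a b)
      | Sum.inr a, Sum.inr b => exact absurd he (hG.2 a b)
      | Sum.inl a, Sum.inr b => exact ⟨⟨(a, b), he⟩, rfl⟩
      | Sum.inr a, Sum.inl b =>
        refine ⟨⟨(b, a), he.symm⟩, ?_⟩
        simp [Sym2.eq_swap]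

lemma card_crossPairs {α β : Type*} (G : SimpleGraph (α ⊕ β)) (hG : Bip G) :
    Nat.card (CrossPairs G) = Nat.card G.edgeSet :=
  Nat.card_congr (crossPairs_equiv G hG).some

section Glue3

variable (A : Finset (Fin r)) (B : Finset (Fin s))
  (T1 : SimpleGraph (↥A ⊕ ↥B)) (T2 : SimpleGraph (↥(Aᶜ) ⊕ ↥(Bᶜ)))
  (a : ↥A) (b : ↥(Bᶜ))

lemma glue_edge_card (bip1 : Bip T1) (bip2 : Bip T2)
    (h1 : Nat.card T1.edgeSet = A.card + B.card - 1)
    (h2 : Nat.card T2.edgeSet = Aᶜ.card + Bᶜ.card - 1) :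
    Nat.card (glue A B T1 T2 a b).edgeSet = r + s - 1 := by
  have e1 : Nat.card (CrossPairs (glue A B T1 T2 a b)) =
      Nat.card (CrossPairs T1) + (Nat.card (CrossPairs T2) + 1) := by
    rw [← Nat.card_congr (glueCrossEquiv A B T1 T2 a b), Nat.card_sum, Nat.card_sum]
    simp
  rw [card_crossPairs _ (glue_bip A B T1 T2 a b)] at e1
  rw [card_crossPairs _ bip1, h1] at e1
  rw [card_crossPairs _ bip2, h2] at e1
  have hA : 1 ≤ A.card := Finset.card_pos.mpr ⟨↑a, a.2⟩
  have hB : 1 ≤ Bᶜ.card := Finset.card_pos.mpr ⟨↑b, b.2⟩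
  have cA := Finset.card_add_card_compl A
  have cB := Finset.card_add_card_compl B
  rw [Fintype.card_fin] at cA cB
  omega

lemma glue_T1_adj_iff (z : ↥A) (w : ↥B) :
    (glue A B T1 T2 a b).Adj (Sum.inl ↑z) (Sum.inr ↑w) ↔ T1.Adj (Sum.inl z) (Sum.inr w) := by
  rw [glue_adj_inl_inr]
  constructor
  · rintro (⟨hu, hv, had⟩ | ⟨hu, hv, had⟩ | ⟨h1, h2⟩)
    · convert had <;> simp
    · exact absurd z.2 (Finset.mem_compl.mp hu)
    · exact absurd (h2 ▸ w.2) (Finset.mem_compl.mp b.2)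
  · intro h
    exact Or.inl ⟨z.2, w.2, by convert h <;> simp⟩

lemma glue_T2_adj_iff (z : ↥(Aᶜ)) (w : ↥(Bᶜ)) :
    (glue A B T1 T2 a b).Adj (Sum.inl ↑z) (Sum.inr ↑w) ↔ T2.Adj (Sum.inl z) (Sum.inr w) := by
  rw [glue_adj_inl_inr]
  constructor
  · rintro (⟨hu, hv, had⟩ | ⟨hu, hv, had⟩ | ⟨h1, h2⟩)
    · exact absurd hu (Finset.mem_compl.mp z.2)
    · convert had <;> simp
    · exact absurd (h1 ▸ a.2) (Finset.mem_compl.mp z.2)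
  · intro h
    exact Or.inr (Or.inl ⟨z.2, w.2, by convert h <;> simp⟩)

lemma glue_det_T1 {T1' : SimpleGraph (↥A ⊕ ↥B)} {T2' : SimpleGraph (↥(Aᶜ) ⊕ ↥(Bᶜ))}
    {a' : ↥A} {b' : ↥(Bᶜ)} (bip1 : Bip T1) (bip1' : Bip T1')
    (h : glue A B T1 T2 a b = glue A B T1' T2' a' b') : T1 = T1' := by
  ext x y
  match x, y with
  | Sum.inl z, Sum.inl w => simp [bip1.1 z w, bip1'.1 z w]
  | Sum.inr z, Sum.inr w => simp [bip1.2 z w, bip1'.2 z w]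
  | Sum.inl z, Sum.inr w =>
    rw [← glue_T1_adj_iff A B T1 T2 a b, ← glue_T1_adj_iff A B T1' T2' a' b', h]
  | Sum.inr w, Sum.inl z =>
    rw [T1.adj_comm, T1'.adj_comm,
      ← glue_T1_adj_iff A B T1 T2 a b, ← glue_T1_adj_iff A B T1' T2' a' b', h]

lemma glue_det_T2 {T1' : SimpleGraph (↥A ⊕ ↥B)} {T2' : SimpleGraph (↥(Aᶜ) ⊕ ↥(Bᶜ))}
    {a' : ↥A} {b' : ↥(Bᶜ)} (bip2 : Bip T2) (bip2' : Bip T2')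
    (h : glue A B T1 T2 a b = glue A B T1' T2' a' b') : T2 = T2' := by
  ext x y
  match x, y with
  | Sum.inl z, Sum.inl w => simp [bip2.1 z w, bip2'.1 z w]
  | Sum.inr z, Sum.inr w => simp [bip2.2 z w, bip2'.2 z w]
  | Sum.inl z, Sum.inr w =>
    rw [← glue_T2_adj_iff A B T1 T2 a b, ← glue_T2_adj_iff A B T1' T2' a' b', h]
  | Sum.inr w, Sum.inl z =>
    rw [T2.adj_comm, T2'.adj_comm,
      ← glue_T2_adj_iff A B T1 T2 a b, ← glue_T2_adj_iff A B T1' T2' a' b', h]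

end Glue3



variable {α β : Type*}

/-- transfer along an iso -/
lemma connected_iff_of_iso {V W : Type*} {G : SimpleGraph V} {H : SimpleGraph W}
    (e : G ≃g H) : G.Connected ↔ H.Connected := by
  constructor <;> intro h <;> rw [connected_iff_exists_forall_reachable] at h ⊢
  · obtain ⟨v, hv⟩ := h
    exact ⟨e v, fun w => by simpa using (hv (e.symm w)).map e.toHom⟩
  · obtain ⟨v, hv⟩ := h
    exact ⟨e.symm v, fun w => by simpa using (hv (e w)).map e.symm.toHom⟩

/-- The subtype of "bipartite trees" on `α ⊕ β`. -/
@[reducible] def TreeSet (α β : Type*) [Fintype α] [Fintype β] : Type _ :=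
  {G : SimpleGraph (α ⊕ β) // G.Connected ∧ Bip G ∧
    Nat.card G.edgeSet = Fintype.card α + Fintype.card β - 1}

lemma card_treeSet (α β : Type*) [Fintype α] [Fintype β] :
    Nat.card (TreeSet α β) = Nbi (Fintype.card α) (Fintype.card β) 0 := by
  classical
  set r := Fintype.card α
  set s := Fintype.card β
  let E : α ⊕ β ≃ Fin r ⊕ Fin s := Equiv.sumCongr (Fintype.equivFin α) (Fintype.equivFin β)
  let Φ : SimpleGraph (α ⊕ β) ≃ SimpleGraph (Fin r ⊕ Fin s) :=
    { toFun := fun G => G.comap E.symm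
      invFun := fun H => H.comap E
      left_inv := fun G => by ext a b; simp [comap_adj]
      right_inv := fun H => by ext a b; simp [comap_adj] }
  have key : ∀ G : SimpleGraph (α ⊕ β), G ≃g (Φ G : SimpleGraph (Fin r ⊕ Fin s)) := by
    intro G
    exact ⟨E, by intro a b; simp [Φ, comap_adj]⟩
  rw [Nbi]
  refine Nat.card_congr (Equiv.subtypeEquiv Φ ?_)
  intro G
  have hiso := key G
  have hconn := connected_iff_of_iso hiso
  have hedge : Nat.card G.edgeSet = Nat.card (Φ G).edgeSet :=
    Nat.card_congr hiso.mapEdgeSet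
  have hbip : Bip G ↔ ((∀ a b, ¬ (Φ G).Adj (Sum.inl a) (Sum.inl b)) ∧
      (∀ a b, ¬ (Φ G).Adj (Sum.inr a) (Sum.inr b))) := by
    constructor
    · rintro ⟨h1, h2⟩
      constructor
      · intro a b
        simpa [Φ, comap_adj, E] using h1 ((Fintype.equivFin α).symm a) ((Fintype.equivFin α).symm b)
      · intro a b
        simpa [Φ, comap_adj, E] using h2 ((Fintype.equivFin β).symm a) ((Fintype.equivFin β).symm b)
    · rintro ⟨h1, h2⟩
      constructor
      · intro a b
        simpa [Φ, comap_adj, E] using h1 ((Fintype.equivFin α) a) ((Fintype.equivFin α) b)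
      · intro a b
        simpa [Φ, comap_adj, E] using h2 ((Fintype.equivFin β) a) ((Fintype.equivFin β) b)
  unfold TreeSet Bip at *
  constructor
  · rintro ⟨h1, h2, h3⟩
    exact ⟨hconn.mp h1, (hbip.mp h2).1, (hbip.mp h2).2, by rw [← hedge, h3]; rfl⟩
  · rintro ⟨h1, h2, h3, h4⟩
    exact ⟨hconn.mpr h1, hbip.mpr ⟨h2, h3⟩, by rw [hedge, h4]; rfl⟩

section Comap

variable {V₁ V₂ : Type*}

def inS (P : Finset V₁) (Q : Finset V₂) : V₁ ⊕ V₂ → Prop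
  | Sum.inl x => x ∈ P
  | Sum.inr y => y ∈ Q

def toSub (P : Finset V₁) (Q : Finset V₂) : (z : V₁ ⊕ V₂) → inS P Q z → (↥P ⊕ ↥Q)
  | Sum.inl x, h => Sum.inl ⟨x, h⟩
  | Sum.inr y, h => Sum.inr ⟨y, h⟩

lemma toSub_val (P : Finset V₁) (Q : Finset V₂) (z : V₁ ⊕ V₂) (h : inS P Q z) :
    Sum.map Subtype.val Subtype.val (toSub P Q z h) = z := by cases z <;> rfl

lemma toSub_map (P : Finset V₁) (Q : Finset V₂) (z : ↥P ⊕ ↥Q)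
    (h : inS P Q (Sum.map Subtype.val Subtype.val z)) :
    toSub P Q (Sum.map Subtype.val Subtype.val z) h = z := by cases z <;> rfl

lemma mem_inS_map (P : Finset V₁) (Q : Finset V₂) (z : ↥P ⊕ ↥Q) :
    inS P Q (Sum.map Subtype.val Subtype.val z) := by
  cases z with
  | inl x => exact x.2
  | inr y => exact y.2

lemma lift_reach {G G' : SimpleGraph (V₁ ⊕ V₂)} (hle : G' ≤ G) (P : Finset V₁) (Q : Finset V₂)
    (hcl : ∀ {x y}, G'.Adj x y → inS P Q x → inS P Q y) :
    ∀ {x y} (_ : G'.Walk x y) (hx : inS P Q x) (hy : inS P Q y),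
      (G.comap (Sum.map Subtype.val Subtype.val) : SimpleGraph (↥P ⊕ ↥Q)).Reachable
        (toSub P Q x hx) (toSub P Q y hy) := by
  intro x y p
  induction p with
  | nil => intro hx hy; exact Reachable.refl _
  | @cons x w y h q ih =>
    intro hx hy
    have hw : inS P Q w := hcl h hx
    have hadj : (G.comap (Sum.map Subtype.val Subtype.val) : SimpleGraph (↥P ⊕ ↥Q)).Adj
        (toSub P Q x hx) (toSub P Q w hw) := by
      show G.Adj (Sum.map Subtype.val Subtype.val _) (Sum.map Subtype.val Subtype.val _)
      rw [toSub_val, toSub_val]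
      exact hle h
    exact hadj.reachable.trans (ih hw hy)

lemma comap_connected {G G' : SimpleGraph (V₁ ⊕ V₂)} (hle : G' ≤ G)
    (P : Finset V₁) (Q : Finset V₂)
    (hcl : ∀ {x y}, G'.Adj x y → inS P Q x → inS P Q y)
    (z0 : V₁ ⊕ V₂) (hz0 : inS P Q z0)
    (hreach : ∀ z : ↥P ⊕ ↥Q, G'.Reachable (Sum.map Subtype.val Subtype.val z) z0) :
    (G.comap (Sum.map Subtype.val Subtype.val) : SimpleGraph (↥P ⊕ ↥Q)).Connected := by
  rw [connected_iff_exists_forall_reachable]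
  refine ⟨toSub P Q z0 hz0, fun w => ?_⟩
  obtain ⟨p⟩ := hreach w
  have hw : inS P Q (Sum.map Subtype.val Subtype.val w) := mem_inS_map P Q w
  have := lift_reach hle P Q hcl p hw hz0
  rw [toSub_map] at this
  exact this.symm

lemma comap_isAcyclic {W V : Type*} (G : SimpleGraph V) (hG : G.IsAcyclic) (f : W → V)
    (hf : Function.Injective f) : (G.comap f).IsAcyclic := by
  intro z c hc
  let hom : G.comap f →g G := ⟨f, fun h => h⟩
  exact hG (c.map hom) ((Walk.map_isCycle_iff_of_injective (p := c) hf).mpr hc)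

lemma comap_tree_card [Fintype V₁] [Fintype V₂] {G : SimpleGraph (V₁ ⊕ V₂)}
    (hG : G.IsAcyclic) (P : Finset V₁) (Q : Finset V₂)
    (hconn : (G.comap (Sum.map Subtype.val Subtype.val) : SimpleGraph (↥P ⊕ ↥Q)).Connected) :
    Nat.card (G.comap (Sum.map Subtype.val Subtype.val) :
      SimpleGraph (↥P ⊕ ↥Q)).edgeSet = P.card + Q.card - 1 := by
  classical
  have hac := comap_isAcyclic G hG (Sum.map (Subtype.val : ↥P → V₁) (Subtype.val : ↥Q → V₂))
    (Sum.map_injective.mpr ⟨Subtype.val_injective, Subtype.val_injective⟩)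
  have htree : (G.comap (Sum.map Subtype.val Subtype.val) :
      SimpleGraph (↥P ⊕ ↥Q)).IsTree := ⟨hconn, hac⟩
  letI : Fintype (G.comap (Sum.map Subtype.val Subtype.val) :
      SimpleGraph (↥P ⊕ ↥Q)).edgeSet := Fintype.ofFinite _
  have hcard := htree.card_edgeFinset
  rw [Fintype.card_sum, Fintype.card_coe, Fintype.card_coe] at hcard
  rw [Nat.card_eq_fintype_card, ← Set.toFinset_card]
  rw [edgeFinset] at hcard
  omega

end Comap

section Main

variable {r s : ℕ}

@[reducible] def CutT (r s : ℕ) : Type :=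
  Σ (A : Finset (Fin r)) (B : Finset (Fin s)),
    (TreeSet ↥A ↥B × ↥A) × (TreeSet ↥(Aᶜ) ↥(Bᶜ) × ↥(Bᶜ))

@[reducible] def MTree (r s : ℕ) : Type :=
  Σ G : TreeSet (Fin r) (Fin s), CrossPairs G.1

noncomputable def FF : CutT r s → MTree r s := fun c =>
  ⟨⟨glue c.1 c.2.1 c.2.2.1.1.1 c.2.2.2.1.1 c.2.2.1.2 c.2.2.2.2,
    glue_connected _ _ _ _ _ _ c.2.2.1.1.2.2.1 c.2.2.1.1.2.1 c.2.2.2.1.2.2.1 c.2.2.2.1.2.1,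
    glue_bip _ _ _ _ _ _,
    by
      rw [glue_edge_card _ _ _ _ _ _ c.2.2.1.1.2.2.1 c.2.2.2.1.2.2.1
        (by rw [c.2.2.1.1.2.2.2, Fintype.card_coe, Fintype.card_coe])
        (by rw [c.2.2.2.1.2.2.2, Fintype.card_coe, Fintype.card_coe])]
      simp⟩,
   ⟨(↑c.2.2.1.2, ↑c.2.2.2.2), glue_adj_edge _ _ _ _ _ _⟩⟩

lemma FF_injective : Function.Injective (FF (r := r) (s := s)) := by
  rintro ⟨A, B, ⟨⟨T1, a⟩, ⟨T2, b⟩⟩⟩ ⟨A', B', ⟨⟨T1', a'⟩, ⟨T2', b'⟩⟩⟩ h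
  have hG : glue A B T1.1 T2.1 a b = glue A' B' T1'.1 T2'.1 a' b' :=
    congrArg (fun x : MTree r s => x.1.1) h
  have hpair : ((↑a : Fin r), (↑b : Fin s)) = ((↑a' : Fin r), (↑b' : Fin s)) :=
    congrArg (fun x : MTree r s => x.2.1) h
  have ha : (↑a : Fin r) = ↑a' := congrArg Prod.fst hpair
  have hb : (↑b : Fin s) = ↑b' := congrArg Prod.snd hpair
  have hedge : gedge A B a b = gedge A' B' a' b' := by
    unfold gedge; rw [ha, hb]
  have hglue' : glue' A B T1.1 T2.1 a b = glue' A' B' T1'.1 T2'.1 a' b' := by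
    unfold glue'; rw [hG, hedge]
  have hA : A = A' := by
    ext x
    rw [glue_mem_A_iff A B T1.1 T2.1 a b T1.2.2.1 T1.2.1 x,
      glue_mem_A_iff A' B' T1'.1 T2'.1 a' b' T1'.2.2.1 T1'.2.1 x, hglue', ha]
  subst hA
  have hB : B = B' := by
    ext y
    rw [glue_mem_B_iff A B T1.1 T2.1 a b T1.2.2.1 T1.2.1 y,
      glue_mem_B_iff A B' T1'.1 T2'.1 a' b' T1'.2.2.1 T1'.2.1 y, hglue', ha]
  subst hB
  have hT1 : T1 = T1' := Subtype.ext (glue_det_T1 A B T1.1 T2.1 a b T1.2.2.1 T1'.2.2.1 hG)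
  have hT2 : T2 = T2' := Subtype.ext (glue_det_T2 A B T1.1 T2.1 a b T2.2.2.1 T2'.2.2.1 hG)
  have ha' : a = a' := Subtype.ext ha
  have hb' : b = b' := Subtype.ext hb
  rw [hT1, hT2, ha', hb']

end Main

section Surj

variable {r s : ℕ}

lemma MTree_ext {W W' : TreeSet (Fin r) (Fin s)} {p : CrossPairs W.1} {p' : CrossPairs W'.1}
    (h1 : W.1 = W'.1) (h2 : p.1 = p'.1) : (⟨W, p⟩ : MTree r s) = ⟨W', p'⟩ := by
  obtain ⟨X, hX⟩ := W
  obtain ⟨X', hX'⟩ := W'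
  dsimp at h1
  subst h1
  obtain ⟨q, hq⟩ := p
  obtain ⟨q', hq'⟩ := p'
  dsimp at h2
  subst h2
  rfl

lemma FF_surjective : Function.Surjective (FF (r := r) (s := s)) := by
  rintro ⟨⟨G, hconn, hbip, hcard⟩, ⟨⟨u, v⟩, hadj⟩⟩
  classical
  have hVcard : Fintype.card (Fin r ⊕ Fin s) = r + s := by simp
  have hpos : 1 ≤ r + s := by
    have hne : Nonempty (Fin r ⊕ Fin s) := hconn.nonempty
    have := @Fintype.card_pos (Fin r ⊕ Fin s) _ hne
    omega
  rw [Fintype.card_fin, Fintype.card_fin] at hcard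
  have htree : G.IsTree := isTree_of_connected_card G hconn (by rw [hcard, hVcard]; omega)
  set G' := G.deleteEdges {s(Sum.inl u, Sum.inr v)} with hG'
  have hbridge : ¬ G'.Reachable (Sum.inl u) (Sum.inr v) := by
    have hb := isAcyclic_iff_forall_adj_isBridge.mp htree.2 hadj
    rw [isBridge_iff] at hb
    exact hb
  have hcover : ∀ w, G'.Reachable w (Sum.inl u) ∨ G'.Reachable w (Sum.inr v) := by
    intro w
    obtain ⟨p⟩ := hconn w (Sum.inl u)
    rcases reach_delete_of_reach (u := Sum.inl u) (v := Sum.inr v) p with h | ⟨h, -⟩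
    · exact Or.inl h
    · exact h
  set A : Finset (Fin r) := Finset.univ.filter (fun x => G'.Reachable (Sum.inl x) (Sum.inl u))
    with hA
  set B : Finset (Fin s) := Finset.univ.filter (fun y => G'.Reachable (Sum.inr y) (Sum.inl u))
    with hB
  have memA : ∀ x, x ∈ A ↔ G'.Reachable (Sum.inl x) (Sum.inl u) := by
    intro x; simp [hA]
  have memB : ∀ y, y ∈ B ↔ G'.Reachable (Sum.inr y) (Sum.inl u) := by
    intro y; simp [hB]
  have memAc : ∀ x, x ∈ Aᶜ ↔ G'.Reachable (Sum.inl x) (Sum.inr v) := by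
    intro x
    rw [Finset.mem_compl, memA]
    constructor
    · intro h
      rcases hcover (Sum.inl x) with h' | h'
      · exact absurd h' h
      · exact h'
    · intro h hc
      exact hbridge (hc.symm.trans h)
  have memBc : ∀ y, y ∈ Bᶜ ↔ G'.Reachable (Sum.inr y) (Sum.inr v) := by
    intro y
    rw [Finset.mem_compl, memB]
    constructor
    · intro h
      rcases hcover (Sum.inr y) with h' | h'
      · exact absurd h' h
      · exact h'
    · intro h hc
      exact hbridge (hc.symm.trans h)
  have hcl1 : ∀ {x y}, G'.Adj x y → inS A B x → inS A B y := by
    intro x y hxy hx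
    have hx' : G'.Reachable x (Sum.inl u) := by
      cases x with
      | inl t => exact (memA t).mp hx
      | inr t => exact (memB t).mp hx
    have hy' := hxy.symm.reachable.trans hx'
    cases y with
    | inl t => exact (memA t).mpr hy'
    | inr t => exact (memB t).mpr hy'
  have hcl2 : ∀ {x y}, G'.Adj x y → inS Aᶜ Bᶜ x → inS Aᶜ Bᶜ y := by
    intro x y hxy hx
    have hx' : G'.Reachable x (Sum.inr v) := by
      cases x with
      | inl t => exact (memAc t).mp hx
      | inr t => exact (memBc t).mp hx
    have hy' := hxy.symm.reachable.trans hx'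
    cases y with
    | inl t => exact (memAc t).mpr hy'
    | inr t => exact (memBc t).mpr hy'
  set T1 : SimpleGraph (↥A ⊕ ↥B) := G.comap (Sum.map Subtype.val Subtype.val) with hT1
  set T2 : SimpleGraph (↥(Aᶜ) ⊕ ↥(Bᶜ)) := G.comap (Sum.map Subtype.val Subtype.val) with hT2
  have hle : G' ≤ G := deleteEdges_le _
  have hu' : u ∈ A := (memA u).mpr (Reachable.refl _)
  have hv' : v ∈ Bᶜ := (memBc v).mpr (Reachable.refl _)
  have hbip1 : Bip T1 := ⟨fun a b h => hbip.1 _ _ h, fun a b h => hbip.2 _ _ h⟩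
  have hbip2 : Bip T2 := ⟨fun a b h => hbip.1 _ _ h, fun a b h => hbip.2 _ _ h⟩
  have hconn1 : T1.Connected := by
    refine comap_connected hle A B hcl1 (Sum.inl u) hu' ?_
    rintro (x | y)
    · exact (memA _).mp x.2
    · exact (memB _).mp y.2
  have hconn2 : T2.Connected := by
    refine comap_connected hle Aᶜ Bᶜ hcl2 (Sum.inr v) hv' ?_
    rintro (x | y)
    · exact (memAc _).mp x.2
    · exact (memBc _).mp y.2
  have hT1card : Nat.card T1.edgeSet = A.card + B.card - 1 := comap_tree_card htree.2 A B hconn1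
  have hT2card : Nat.card T2.edgeSet = Aᶜ.card + Bᶜ.card - 1 :=
    comap_tree_card htree.2 Aᶜ Bᶜ hconn2
  have crossChar : ∀ (x : Fin r) (y : Fin s),
      glueRel A B T1 T2 ⟨u, hu'⟩ ⟨v, hv'⟩ x y ↔ G.Adj (Sum.inl x) (Sum.inr y) := by
    intro x y
    constructor
    · rintro (⟨hx, hy, had⟩ | ⟨hx, hy, had⟩ | ⟨h1, h2⟩)
      · exact had
      · exact had
      · rw [h1, h2]; exact hadj
    · intro h
      by_cases hY : x = u ∧ y = v
      · exact Or.inr (Or.inr hY)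
      · have hne : s(Sum.inl x, Sum.inr y) ≠ s((Sum.inl u : Fin r ⊕ Fin s), Sum.inr v) := by
          intro hc
          exact hY (sym2_cross_eq.mp hc)
        have hG'adj : G'.Adj (Sum.inl x) (Sum.inr y) := by
          rw [hG']
          simp only [deleteEdges_adj, Set.mem_singleton_iff]
          exact ⟨h, hne⟩
        by_cases hx : x ∈ A
        · have hy : y ∈ B := (memB y).mpr (hG'adj.symm.reachable.trans ((memA x).mp hx))
          exact Or.inl ⟨hx, hy, h⟩
        · have hxc : x ∈ Aᶜ := Finset.mem_compl.mpr hx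
          have hxv : G'.Reachable (Sum.inl x) (Sum.inr v) := (memAc x).mp hxc
          have hyc : y ∈ Bᶜ := (memBc y).mpr (hG'adj.symm.reachable.trans hxv)
          exact Or.inr (Or.inl ⟨hxc, hyc, h⟩)
  have hgl : glue A B T1 T2 ⟨u, hu'⟩ ⟨v, hv'⟩ = G := by
    ext x y
    match x, y with
    | Sum.inl x, Sum.inl y =>
      constructor
      · intro h; exact absurd h (glue_adj_inl_inl A B T1 T2 ⟨u, hu'⟩ ⟨v, hv'⟩)
      · intro h; exact absurd h (hbip.1 x y)
    | Sum.inr x, Sum.inr y =>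
      constructor
      · intro h; exact absurd h (glue_adj_inr_inr A B T1 T2 ⟨u, hu'⟩ ⟨v, hv'⟩)
      · intro h; exact absurd h (hbip.2 x y)
    | Sum.inl x, Sum.inr y =>
      rw [glue_adj_inl_inr]
      exact crossChar x y
    | Sum.inr y, Sum.inl x =>
      rw [glue_adj_inr_inl, G.adj_comm]
      exact crossChar x y
  refine ⟨⟨A, B, ⟨⟨⟨T1, hconn1, hbip1, by
      rw [Fintype.card_coe, Fintype.card_coe]; exact hT1card⟩, ⟨u, hu'⟩⟩,
    ⟨⟨T2, hconn2, hbip2, by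
      rw [Fintype.card_coe, Fintype.card_coe]; exact hT2card⟩, ⟨v, hv'⟩⟩⟩⟩, ?_⟩
  exact MTree_ext hgl rfl

end Surj

section Counting

open Finset

lemma nat_card_sigma {ι : Type*} [Fintype ι] (f : ι → Type*) [∀ i, Finite (f i)] :
    Nat.card (Σ i, f i) = ∑ i, Nat.card (f i) := by
  classical
  letI : ∀ i, Fintype (f i) := fun i => Fintype.ofFinite _
  rw [Nat.card_eq_fintype_card]
  rw [Fintype.card_sigma]
  simp [Nat.card_eq_fintype_card]

lemma card_MTree (r s : ℕ) : Nat.card (MTree r s) = Nbi r s 0 * (r + s - 1) := by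
  classical
  letI : Fintype (TreeSet (Fin r) (Fin s)) := Fintype.ofFinite _
  rw [MTree, nat_card_sigma]
  have hterm : ∀ G : TreeSet (Fin r) (Fin s), Nat.card (CrossPairs G.1) = r + s - 1 := by
    intro G
    rw [card_crossPairs G.1 G.2.2.1, G.2.2.2, Fintype.card_fin, Fintype.card_fin]
  rw [Finset.sum_congr rfl (fun G _ => hterm G), Finset.sum_const, Finset.card_univ,
    ← Nat.card_eq_fintype_card, smul_eq_mul]
  congr 1
  have := card_treeSet (Fin r) (Fin s)
  rwa [Fintype.card_fin, Fintype.card_fin] at this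

lemma sum_finset_card {n : ℕ} (f : ℕ → ℕ) :
    ∑ A : Finset (Fin n), f A.card = ∑ k ∈ Finset.range (n + 1), n.choose k * f k := by
  classical
  rw [← Finset.powerset_univ, Finset.sum_powerset]
  rw [Finset.card_univ, Fintype.card_fin]
  refine Finset.sum_congr rfl fun j hj => ?_
  have : ∀ A ∈ Finset.powersetCard j (Finset.univ : Finset (Fin n)), f A.card = f j := by
    intro A hA
    rw [(Finset.mem_powersetCard_univ.mp hA)]
  rw [Finset.sum_congr rfl this, Finset.sum_const, Finset.card_powersetCard,
    Finset.card_univ, Fintype.card_fin, smul_eq_mul]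

lemma card_CutT (r s : ℕ) : Nat.card (CutT r s) =
    ∑ r1 ∈ Finset.range (r + 1), ∑ s1 ∈ Finset.range (s + 1),
      r.choose r1 * (s.choose s1 *
        ((Nbi r1 s1 0 * r1) * (Nbi (r - r1) (s - s1) 0 * (s - s1)))) := by
  classical
  rw [CutT, nat_card_sigma]
  have h1 : ∀ A : Finset (Fin r),
      Nat.card (Σ B : Finset (Fin s), (TreeSet ↥A ↥B × ↥A) × (TreeSet ↥(Aᶜ) ↥(Bᶜ) × ↥(Bᶜ))) =
      ∑ s1 ∈ Finset.range (s + 1), s.choose s1 *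
        ((Nbi A.card s1 0 * A.card) * (Nbi (r - A.card) (s - s1) 0 * (s - s1))) := by
    intro A
    rw [nat_card_sigma]
    have h2 : ∀ B : Finset (Fin s),
        Nat.card ((TreeSet ↥A ↥B × ↥A) × (TreeSet ↥(Aᶜ) ↥(Bᶜ) × ↥(Bᶜ))) =
        (Nbi A.card B.card 0 * A.card) * (Nbi (r - A.card) (s - B.card) 0 * (s - B.card)) := by
      intro B
      rw [Nat.card_prod, Nat.card_prod, Nat.card_prod]
      have e1 : Nat.card (TreeSet ↥A ↥B) = Nbi A.card B.card 0 := by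
        rw [card_treeSet ↥A ↥B, Fintype.card_coe, Fintype.card_coe]
      have e2 : Nat.card (TreeSet ↥(Aᶜ) ↥(Bᶜ)) = Nbi (r - A.card) (s - B.card) 0 := by
        rw [card_treeSet ↥(Aᶜ) ↥(Bᶜ), Fintype.card_coe, Fintype.card_coe,
          Finset.card_compl, Finset.card_compl, Fintype.card_fin, Fintype.card_fin]
      have e3 : Nat.card ↥A = A.card := by
        rw [Nat.card_eq_fintype_card, Fintype.card_coe]
      have e4 : Nat.card ↥(Bᶜ) = s - B.card := by
        rw [Nat.card_eq_fintype_card, Fintype.card_coe, Finset.card_compl, Fintype.card_fin]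
      rw [e1, e2, e3, e4]
    rw [Finset.sum_congr rfl (fun B _ => h2 B)]
    exact sum_finset_card (fun s1 => (Nbi A.card s1 0 * A.card) *
      (Nbi (r - A.card) (s - s1) 0 * (s - s1)))
  rw [Finset.sum_congr rfl (fun A _ => h1 A),
    sum_finset_card (fun r1 => ∑ s1 ∈ Finset.range (s + 1), s.choose s1 *
      ((Nbi r1 s1 0 * r1) * (Nbi (r - r1) (s - s1) 0 * (s - s1))))]
  exact Finset.sum_congr rfl fun r1 _ => Finset.mul_sum _ _ _

lemma key_nat (r s : ℕ) :
    ∑ r1 ∈ Finset.range (r + 1), ∑ s1 ∈ Finset.range (s + 1),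
      r.choose r1 * (s.choose s1 *
        ((Nbi r1 s1 0 * r1) * (Nbi (r - r1) (s - s1) 0 * (s - s1)))) =
    Nbi r s 0 * (r + s - 1) := by
  rw [← card_CutT, ← card_MTree]
  exact Nat.card_eq_of_bijective FF ⟨FF_injective, FF_surjective⟩

end Counting

section Final

open Finset

lemma Nbi_zero : Nbi 0 0 0 = 0 := by
  have : IsEmpty {G : SimpleGraph (Fin 0 ⊕ Fin 0) //
      G.Connected ∧
      (∀ a b, ¬ G.Adj (Sum.inl a) (Sum.inl b)) ∧
      (∀ a b, ¬ G.Adj (Sum.inr a) (Sum.inr b)) ∧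
      Nat.card G.edgeSet = 0 + 0 - 1 + 0} := by
    constructor
    rintro ⟨G, hconn, -⟩
    rcases hconn.nonempty with ⟨x | x⟩ <;> exact x.elim0
  rw [Nbi]
  exact Nat.card_of_isEmpty

lemma part2 (r s : ℕ) (h : (r, s) ≠ (0, 0)) :
    (∑ r1 ∈ Finset.range (r + 1), ∑ s1 ∈ Finset.range (s + 1),
        (r.choose r1 : ℚ) * (s.choose s1 : ℚ) * (r1 : ℚ) * (Nbi r1 s1 0 : ℚ) *
          (((s - s1 : ℕ) : ℚ)) * (Nbi (r - r1) (s - s1) 0 : ℚ)) =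
      ((r : ℚ) + s - 1) * (Nbi r s 0 : ℚ) := by
  have hrs : 1 ≤ r + s := by
    rcases Nat.eq_zero_or_pos (r + s) with h0 | h0
    · exfalso
      apply h
      have : r = 0 ∧ s = 0 := by omega
      simp [this.1, this.2]
    · exact h0
  have hq := congrArg (fun n : ℕ => (n : ℚ)) (key_nat r s)
  push_cast at hq
  have hcast : ((r : ℚ) + s - 1) = ((r + s - 1 : ℕ) : ℚ) := by
    rw [Nat.cast_sub hrs]
    push_cast
    ring
  rw [hcast, mul_comm, ← hq]
  exact Finset.sum_congr rfl fun r1 _ => Finset.sum_congr rfl fun s1 _ => by push_cast; ring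

noncomputable def fs2 (i j : ℕ) : Fin 2 →₀ ℕ := Finsupp.equivFunOnFinite.symm ![i, j]

@[simp] lemma fs2_apply0 (i j : ℕ) : fs2 i j 0 = i := by simp [fs2]

@[simp] lemma fs2_apply1 (i j : ℕ) : fs2 i j 1 = j := by simp [fs2]

lemma antidiag_sum (m : Fin 2 →₀ ℕ) (g : ℕ → ℕ → ℕ → ℕ → ℚ) :
    ∑ p ∈ Finset.HasAntidiagonal.antidiagonal m, g (p.1 0) (p.1 1) (p.2 0) (p.2 1)
      = ∑ q ∈ Finset.range (m 0 + 1) ×ˢ Finset.range (m 1 + 1),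
          g q.1 q.2 (m 0 - q.1) (m 1 - q.2) := by
  refine Finset.sum_bij' (fun p _ => (p.1 0, p.1 1))
    (fun q _ => (fs2 q.1 q.2, fs2 (m 0 - q.1) (m 1 - q.2))) ?_ ?_ ?_ ?_ ?_
  · intro p hp
    rw [Finset.HasAntidiagonal.mem_antidiagonal] at hp
    have h0 : p.1 0 + p.2 0 = m 0 := by rw [← Finsupp.add_apply, hp]
    have h1 : p.1 1 + p.2 1 = m 1 := by rw [← Finsupp.add_apply, hp]
    rw [Finset.mem_product, Finset.mem_range, Finset.mem_range]
    omega
  · intro q hq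
    rw [Finset.mem_product, Finset.mem_range, Finset.mem_range] at hq
    rw [Finset.HasAntidiagonal.mem_antidiagonal]
    ext a
    rw [Finsupp.add_apply]
    fin_cases a <;> simp <;> omega
  · intro p hp
    rw [Finset.HasAntidiagonal.mem_antidiagonal] at hp
    have h0 : p.1 0 + p.2 0 = m 0 := by rw [← Finsupp.add_apply, hp]
    have h1 : p.1 1 + p.2 1 = m 1 := by rw [← Finsupp.add_apply, hp]
    refine Prod.ext ?_ ?_ <;> dsimp only <;> ext a <;> fin_cases a <;> simp <;> omega
  · intro q hq
    simp
  · intro p hp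
    rw [Finset.HasAntidiagonal.mem_antidiagonal] at hp
    have h0 : p.1 0 + p.2 0 = m 0 := by rw [← Finsupp.add_apply, hp]
    have h1 : p.1 1 + p.2 1 = m 1 := by rw [← Finsupp.add_apply, hp]
    have e0 : m 0 - p.1 0 = p.2 0 := by omega
    have e1 : m 1 - p.1 1 = p.2 1 := by omega
    rw [e0, e1]

lemma factorial_ne (n : ℕ) : ((n.factorial : ℚ)) ≠ 0 := by
  exact_mod_cast n.factorial_ne_zero

lemma term_eq {r s i j : ℕ} (hi : i ≤ r) (hj : j ≤ s) (N N' : ℕ) :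
    ((i : ℚ) * N / (i.factorial * j.factorial)) *
      (((s - j : ℕ) : ℚ) * N' / ((r - i).factorial * (s - j).factorial)) =
    ((r.choose i : ℚ) * (s.choose j : ℚ) * i * N * ((s - j : ℕ) : ℚ) * N')
      / (r.factorial * s.factorial) := by
  have h1 : ((r.choose i : ℚ) * i.factorial * (r - i).factorial) = r.factorial := by
    exact_mod_cast Nat.choose_mul_factorial_mul_factorial hi
  have h2 : ((s.choose j : ℚ) * j.factorial * (s - j).factorial) = s.factorial := by
    exact_mod_cast Nat.choose_mul_factorial_mul_factorial hj
  rw [div_mul_div_comm, div_eq_div_iff (by positivity) (by positivity), ← h1, ← h2]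
  ring

end Final

end AuxProofOfStmt8

/-- `T_x·T_y = T_x + T_y - T`; equivalently, for all `(r,s) ≠ (0,0)`,
`∑_{r1,s1} C(r,r1) C(s,s1) r1 N_bi(r1,s1,0) (s-s1) N_bi(r-r1,s-s1,0)
  = (r+s-1)·N_bi(r,s,0)`. -/
theorem stmt8 :
    Tx * Ty = Tx + Ty - Ts ∧
      ∀ r s : ℕ, (r, s) ≠ (0, 0) →
        (∑ r1 ∈ Finset.range (r + 1), ∑ s1 ∈ Finset.range (s + 1),
            (r.choose r1 : ℚ) * (s.choose s1 : ℚ) * (r1 : ℚ) * (Nbi r1 s1 0 : ℚ) *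
              (((s - s1 : ℕ) : ℚ)) * (Nbi (r - r1) (s - s1) 0 : ℚ)) =
          ((r : ℚ) + s - 1) * (Nbi r s 0 : ℚ) := by
  constructor
  · apply MvPowerSeries.ext
    intro m
    rw [MvPowerSeries.coeff_mul, map_sub, map_add]
    simp only [MvPowerSeries.coeff_apply]
    by_cases hm : m = 0
    · subst hm
      rw [Finsupp.antidiagonal_zero]
      simp [Tx, Ty, Ts, Nbi_zero]
    · have h00 : (m 0, m 1) ≠ (0, 0) := by
        intro hc
        apply hm
        ext a
        fin_cases a
        · simpa using congrArg Prod.fst hc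
        · simpa using congrArg Prod.snd hc
      have e1 : (∑ p ∈ Finset.HasAntidiagonal.antidiagonal m, Tx p.1 * Ty p.2)
          = ∑ q ∈ Finset.range (m 0 + 1) ×ˢ Finset.range (m 1 + 1),
              ((q.1 : ℚ) * (Nbi q.1 q.2 0 : ℚ) / ((q.1.factorial : ℚ) * (q.2.factorial : ℚ))) *
              (((m 1 - q.2 : ℕ) : ℚ) * (Nbi (m 0 - q.1) (m 1 - q.2) 0 : ℚ) /
                (((m 0 - q.1).factorial : ℚ) * ((m 1 - q.2).factorial : ℚ))) :=
        antidiag_sum m (fun i j k l => ((i : ℚ) * (Nbi i j 0 : ℚ) /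
            ((i.factorial : ℚ) * (j.factorial : ℚ))) *
          (((l : ℕ) : ℚ) * (Nbi k l 0 : ℚ) / ((k.factorial : ℚ) * (l.factorial : ℚ))))
      rw [e1, Finset.sum_product]
      have e3 : ∀ i ∈ Finset.range (m 0 + 1), ∀ j ∈ Finset.range (m 1 + 1),
          ((i : ℚ) * (Nbi i j 0 : ℚ) / ((i.factorial : ℚ) * (j.factorial : ℚ))) *
              (((m 1 - j : ℕ) : ℚ) * (Nbi (m 0 - i) (m 1 - j) 0 : ℚ) /
                (((m 0 - i).factorial : ℚ) * ((m 1 - j).factorial : ℚ)))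
            = (((m 0).choose i : ℚ) * ((m 1).choose j : ℚ) * i * (Nbi i j 0 : ℚ) *
                ((m 1 - j : ℕ) : ℚ) * (Nbi (m 0 - i) (m 1 - j) 0 : ℚ))
              / (((m 0).factorial : ℚ) * ((m 1).factorial : ℚ)) := by
        intro i hi j hj
        exact term_eq (Nat.lt_succ_iff.mp (Finset.mem_range.mp hi))
          (Nat.lt_succ_iff.mp (Finset.mem_range.mp hj)) _ _
      rw [Finset.sum_congr rfl (fun i hi => Finset.sum_congr rfl (fun j hj => e3 i hi j hj))]
      simp only [← Finset.sum_div]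
      rw [part2 (m 0) (m 1) h00]
      have h1 := factorial_ne (m 0)
      have h2 := factorial_ne (m 1)
      show _ = Tx m + Ty m - Ts m
      simp only [Tx, Ty, Ts]
      field_simp
  · exact part2
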